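/- arXiv:2410.18602 — 2 statements merged into one kernel-verified Lean document; each statement's English description precedes it below -/
import Mathlib

section
/- CPDA is incentive compatible: in the combinatorial diffusion auction setting, for every buyer i with true type θ_i, every report θ'_i with r'_i ⊆ r_i, every report profile θ'_{-i} of the others, and every order o ∈ O(V), u_i^o(θ_i, (θ_i, θ'_{-i})) ≥ u_i^o(θ_i, (θ'_i, θ'_{-i})). -/
namespace DA

open scoped Classical

/-- A report profile for selling `k` homogeneous items: each agent reports a
valuation over quantities `0, …, k` and a set of neighbors. -/
structure Profile (V : Type*) (k : ℕ) where
  val : V → ℕ → ℝ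
  nbr : V → Set V

/-- A valuation is valid if it is normalized (`v 0 = 0`) and has
non-increasing marginals on `{0, …, k}`. -/
def ValidVal (k : ℕ) (v : ℕ → ℝ) : Prop :=
  v 0 = 0 ∧ ∀ q : ℕ, q + 2 ≤ k → v (q + 2) - v (q + 1) ≤ v (q + 1) - v q

variable {V : Type*}

/-- A profile is valid (w.r.t. seller `s`) if every buyer's valuation is valid. -/
def Profile.Valid {k : ℕ} (θ : Profile V k) (s : V) : Prop :=
  ∀ i : V, i ≠ s → ValidVal k (θ.val i)

/-- The reported (undirected) adjacency: `{i, j}` is an edge whenever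
`j ∈ r'_i` (or symmetrically `i ∈ r'_j`). -/
def Profile.adj {k : ℕ} (θ : Profile V k) (i j : V) : Prop :=
  j ∈ θ.nbr i ∨ i ∈ θ.nbr j

/-- The feasible set `F(θ', B)` of a coalition `B`: the buyers in `B` that are
connected to the seller `s` by a path of reported edges lying inside `B`
(empty if `s ∉ B`). -/
def Profile.feasible {k : ℕ} (θ : Profile V k) (s : V) (B : Set V) : Set V :=
  {i | i ≠ s ∧ i ∈ B ∧ s ∈ B ∧
    Relation.ReflTransGen (fun a b => θ.adj a b ∧ a ∈ B ∧ b ∈ B) s i}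

/-- Updating agent `i`'s report in a profile. -/
def updateAgent [DecidableEq V] {k : ℕ} (θ : Profile V k) (i : V)
    (v : ℕ → ℝ) (r : Set V) : Profile V k :=
  ⟨Function.update θ.val i v, Function.update θ.nbr i r⟩

/-- The profile `θ'_B` obtained by removing (setting to nil) the reports of
all agents outside the coalition `B`. -/
noncomputable def Profile.restrict {k : ℕ} (θ : Profile V k) (B : Set V) : Profile V k :=
  ⟨fun i q => if i ∈ B then θ.val i q else 0,
   fun i => if i ∈ B then θ.nbr i ∩ B else ∅⟩

section Homogeneous

variable [Fintype V] [DecidableEq V]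

/-- Social welfare of an allocation `π` under reports `θ`. -/
def SW {k : ℕ} (θ : Profile V k) (s : V) (π : V → ℕ) : ℝ :=
  ∑ i ∈ Finset.univ.erase s, θ.val i (π i)

/-- The allocations admissible for a coalition `B` with irrevocable prior
allocation `πhat`: at most `k` items in total are allocated (none to the
seller), only buyers in `F(θ, B)` receive items, and nobody receives fewer
items than in `πhat`. -/
def feasAllocs {k : ℕ} (θ : Profile V k) (s : V) (B : Set V) (πhat : V → ℕ) :
    Set (V → ℕ) :=
  {π | π s = 0 ∧ (∑ i ∈ Finset.univ.erase s, π i) ≤ k ∧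
    (∀ i, i ∉ θ.feasible s B → π i = 0) ∧ ∀ j, j ≠ s → πhat j ≤ π j}

/-- `SW*(θ, B, πhat)`: the maximum social welfare over the admissible
allocations for coalition `B` with prior allocation `πhat`. -/
noncomputable def SWstar {k : ℕ} (θ : Profile V k) (s : V) (B : Set V)
    (πhat : V → ℕ) : ℝ :=
  sSup (SW θ s '' feasAllocs θ s B πhat)

/-- A chosen allocation attaining `SW*(θ, B, πhat)`. -/
noncomputable def bestAlloc {k : ℕ} (θ : Profile V k) (s : V) (B : Set V)
    (πhat : V → ℕ) : V → ℕ :=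
  Classical.epsilon fun π =>
    π ∈ feasAllocs θ s B πhat ∧ SW θ s π = SWstar θ s B πhat

/-- `o_{≺i}`: the set of agents strictly preceding `i` in the order `o`. -/
def pred (o : V ≃ Fin (Fintype.card V)) (i : V) : Set V := {j | o j < o i}

/-- `o_{≼i} = o_{≺i} ∪ {i}`. -/
def predeq (o : V ≃ Fin (Fintype.card V)) (i : V) : Set V := {j | o j ≤ o i}

/-- The partial allocation produced by PDA after the first `t` agents of the
order `o` have been traversed: the seller is skipped, and each traversed buyer
`i` receives her share in a chosen allocation attaining
`SW*(θ, o_{≼i}, π^{o≺i})`, earlier allocations being irrevocable. -/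
noncomputable def pdaStep {k : ℕ} (θ : Profile V k) (s : V)
    (o : V ≃ Fin (Fintype.card V)) : ℕ → V → ℕ
  | 0 => fun _ => 0
  | t + 1 =>
    if h : t < Fintype.card V then
      let i := o.symm ⟨t, h⟩
      if i = s then pdaStep θ s o t
      else Function.update (pdaStep θ s o t) i
        (bestAlloc θ s (predeq o i) (pdaStep θ s o t) i)
    else pdaStep θ s o t

/-- `π^{o≺i}`: the allocation fixed by PDA right before agent `i` is traversed. -/
noncomputable def pdaPrior {k : ℕ} (θ : Profile V k) (s : V)
    (o : V ≃ Fin (Fintype.card V)) (i : V) : V → ℕ :=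
  pdaStep θ s o (o i : ℕ)

/-- The final allocation `π^o` produced by PDA under the order `o`. -/
noncomputable def pdaAlloc {k : ℕ} (θ : Profile V k) (s : V)
    (o : V ≃ Fin (Fintype.card V)) : V → ℕ :=
  pdaStep θ s o (Fintype.card V)

/-- The payment charged by PDA to agent `i` under the order `o`:
`p_i = SW*(θ, o_{≺i}, π^{o≺i}) − SW*(θ, o_{≼i}, π^{o≺i}) + v'_i(π_i)`, except
that agents traversed after all `k` items have been allocated pay `0`
(and the seller pays nothing). -/
noncomputable def pdaPay {k : ℕ} (θ : Profile V k) (s : V)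
    (o : V ≃ Fin (Fintype.card V)) (i : V) : ℝ :=
  if i = s then 0
  else if (∑ j ∈ Finset.univ.erase s, pdaPrior θ s o i j) = k then 0
  else SWstar θ s (pred o i) (pdaPrior θ s o i)
    - SWstar θ s (predeq o i) (pdaPrior θ s o i)
    + θ.val i (pdaAlloc θ s o i)

/-- `u_i^o`: the utility of buyer `i` with true valuation `v` under order `o`. -/
noncomputable def pdaUtil {k : ℕ} (v : ℕ → ℝ) (θ : Profile V k) (s : V)
    (o : V ≃ Fin (Fintype.card V)) (i : V) : ℝ :=
  v (pdaAlloc θ s o i) - pdaPay θ s o i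

/-- `E_PDA(u_i)`: buyer `i`'s expected utility over the uniformly random order. -/
noncomputable def pdaExpUtil {k : ℕ} (v : ℕ → ℝ) (θ : Profile V k) (s : V)
    (i : V) : ℝ :=
  (∑ o : V ≃ Fin (Fintype.card V), pdaUtil v θ s o i) /
    ((Fintype.card V).factorial : ℝ)

/-- `μ(θ)`: the fraction of orders for which PDA terminates with no item sold. -/
noncomputable def mu {k : ℕ} (θ : Profile V k) (s : V) : ℝ :=
  (Nat.card {o : V ≃ Fin (Fintype.card V) // ∀ j, pdaAlloc θ s o j = 0} : ℝ) /
    ((Fintype.card V).factorial : ℝ)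

/-- The Shapley contribution `φ_i(θ)` of agent `i`. -/
noncomputable def shapley {k : ℕ} (θ : Profile V k) (s : V) (i : V) : ℝ :=
  ∑ B ∈ (Finset.univ.erase i).powerset,
    ((B.card.factorial * (Fintype.card V - B.card - 1).factorial : ℝ) /
      ((Fintype.card V).factorial : ℝ)) *
    (SWstar θ s (↑(insert i B)) 0 - SWstar θ s (↑B) 0)

end Homogeneous

end DA

namespace DA

open scoped Classical

/-- A report profile for the combinatorial setting with item set
`K = {1, …, k}`: each agent reports a valuation over bundles (subsets of the
items) and a set of neighbors. -/
structure CProfile (V : Type*) (k : ℕ) where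
  val : V → Finset (Fin k) → ℝ
  nbr : V → Set V

/-- A combinatorial valuation is valid if it is normalized: `v ∅ = 0`. -/
def CValidVal (k : ℕ) (v : Finset (Fin k) → ℝ) : Prop := v ∅ = 0

variable {V : Type*}

/-- A combinatorial profile is valid if every buyer's valuation is valid. -/
def CProfile.Valid {k : ℕ} (θ : CProfile V k) (s : V) : Prop :=
  ∀ i : V, i ≠ s → CValidVal k (θ.val i)

/-- The reported (undirected) adjacency. -/
def CProfile.adj {k : ℕ} (θ : CProfile V k) (i j : V) : Prop :=
  j ∈ θ.nbr i ∨ i ∈ θ.nbr j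

/-- The feasible set `F(θ', B)` of a coalition `B`. -/
def CProfile.feasible {k : ℕ} (θ : CProfile V k) (s : V) (B : Set V) : Set V :=
  {i | i ≠ s ∧ i ∈ B ∧ s ∈ B ∧
    Relation.ReflTransGen (fun a b => θ.adj a b ∧ a ∈ B ∧ b ∈ B) s i}

/-- Updating agent `i`'s report in a combinatorial profile. -/
def CupdateAgent [DecidableEq V] {k : ℕ} (θ : CProfile V k) (i : V)
    (v : Finset (Fin k) → ℝ) (r : Set V) : CProfile V k :=
  ⟨Function.update θ.val i v, Function.update θ.nbr i r⟩

/-- The combinatorial profile `θ'_B` obtained by removing the reports of all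
agents outside the coalition `B`. -/
noncomputable def CProfile.restrict {k : ℕ} (θ : CProfile V k) (B : Set V) :
    CProfile V k :=
  ⟨fun i q => if i ∈ B then θ.val i q else 0,
   fun i => if i ∈ B then θ.nbr i ∩ B else ∅⟩

section Combinatorial

variable [Fintype V] [DecidableEq V]

/-- Social welfare of a combinatorial allocation `π`. -/
def CSW {k : ℕ} (θ : CProfile V k) (s : V) (π : V → Finset (Fin k)) : ℝ :=
  ∑ i ∈ Finset.univ.erase s, θ.val i (π i)

/-- The combinatorial allocations admissible for a coalition `B` with
irrevocable prior allocation `πhat`: each item goes to at most one buyer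
(none to the seller), only buyers in `F(θ, B)` receive items, and every
buyer keeps at least the bundle given in `πhat`. -/
def CfeasAllocs {k : ℕ} (θ : CProfile V k) (s : V) (B : Set V)
    (πhat : V → Finset (Fin k)) : Set (V → Finset (Fin k)) :=
  {π | π s = ∅ ∧ (∀ i j, i ≠ j → Disjoint (π i) (π j)) ∧
    (∀ i, i ∉ θ.feasible s B → π i = ∅) ∧ ∀ j, j ≠ s → πhat j ⊆ π j}

/-- `SW*(θ, B, πhat)` in the combinatorial setting. -/
noncomputable def CSWstar {k : ℕ} (θ : CProfile V k) (s : V) (B : Set V)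
    (πhat : V → Finset (Fin k)) : ℝ :=
  sSup (CSW θ s '' CfeasAllocs θ s B πhat)

/-- A chosen combinatorial allocation attaining `SW*(θ, B, πhat)`. -/
noncomputable def CbestAlloc {k : ℕ} (θ : CProfile V k) (s : V) (B : Set V)
    (πhat : V → Finset (Fin k)) : V → Finset (Fin k) :=
  Classical.epsilon fun π =>
    π ∈ CfeasAllocs θ s B πhat ∧ CSW θ s π = CSWstar θ s B πhat

/-- The partial allocation produced by CPDA after the first `t` agents of the
order `o` have been traversed. -/
noncomputable def cpdaStep {k : ℕ} (θ : CProfile V k) (s : V)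
    (o : V ≃ Fin (Fintype.card V)) : ℕ → V → Finset (Fin k)
  | 0 => fun _ => ∅
  | t + 1 =>
    if h : t < Fintype.card V then
      let i := o.symm ⟨t, h⟩
      if i = s then cpdaStep θ s o t
      else Function.update (cpdaStep θ s o t) i
        (CbestAlloc θ s (predeq o i) (cpdaStep θ s o t) i)
    else cpdaStep θ s o t

/-- `π^{o≺i}` in CPDA. -/
noncomputable def cpdaPrior {k : ℕ} (θ : CProfile V k) (s : V)
    (o : V ≃ Fin (Fintype.card V)) (i : V) : V → Finset (Fin k) :=
  cpdaStep θ s o (o i : ℕ)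

/-- The final allocation produced by CPDA under the order `o`. -/
noncomputable def cpdaAlloc {k : ℕ} (θ : CProfile V k) (s : V)
    (o : V ≃ Fin (Fintype.card V)) : V → Finset (Fin k) :=
  cpdaStep θ s o (Fintype.card V)

/-- The payment charged by CPDA to agent `i` under the order `o`; agents
traversed after all items have been allocated pay `0`. -/
noncomputable def cpdaPay {k : ℕ} (θ : CProfile V k) (s : V)
    (o : V ≃ Fin (Fintype.card V)) (i : V) : ℝ :=
  if i = s then 0
  else if Finset.univ.biUnion (cpdaPrior θ s o i) = (Finset.univ : Finset (Fin k)) then 0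
  else CSWstar θ s (pred o i) (cpdaPrior θ s o i)
    - CSWstar θ s (predeq o i) (cpdaPrior θ s o i)
    + θ.val i (cpdaAlloc θ s o i)

/-- `u_i^o` in CPDA, with true valuation `v`. -/
noncomputable def cpdaUtil {k : ℕ} (v : Finset (Fin k) → ℝ) (θ : CProfile V k)
    (s : V) (o : V ≃ Fin (Fintype.card V)) (i : V) : ℝ :=
  v (cpdaAlloc θ s o i) - cpdaPay θ s o i

/-- `E_CPDA(u_i)`: expected utility over the uniformly random order. -/
noncomputable def cpdaExpUtil {k : ℕ} (v : Finset (Fin k) → ℝ)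
    (θ : CProfile V k) (s : V) (i : V) : ℝ :=
  (∑ o : V ≃ Fin (Fintype.card V), cpdaUtil v θ s o i) /
    ((Fintype.card V).factorial : ℝ)

/-- `μ(θ)` for CPDA: the fraction of orders for which no item is sold. -/
noncomputable def cmu {k : ℕ} (θ : CProfile V k) (s : V) : ℝ :=
  (Nat.card {o : V ≃ Fin (Fintype.card V) // ∀ j, cpdaAlloc θ s o j = ∅} : ℝ) /
    ((Fintype.card V).factorial : ℝ)

/-- The Shapley contribution `φ_i(θ)` of agent `i` in the combinatorial setting. -/
noncomputable def cshapley {k : ℕ} (θ : CProfile V k) (s : V) (i : V) : ℝ :=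
  ∑ B ∈ (Finset.univ.erase i).powerset,
    ((B.card.factorial * (Fintype.card V - B.card - 1).factorial : ℝ) /
      ((Fintype.card V).factorial : ℝ)) *
    (CSWstar θ s (↑(insert i B)) (fun _ => ∅) - CSWstar θ s (↑B) (fun _ => ∅))

end Combinatorial

end DA


set_option linter.unusedSectionVars false
namespace DA

open scoped Classical

variable {V : Type*} [Fintype V] [DecidableEq V] {k : ℕ}

lemma cfeas_image_finite (θ : CProfile V k) (s : V) (B : Set V)
    (πhat : V → Finset (Fin k)) :
    (CSW θ s '' CfeasAllocs θ s B πhat).Finite :=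
  (Set.toFinite _).image _

lemma le_CSWstar {θ : CProfile V k} {s : V} {B : Set V}
    {πhat π : V → Finset (Fin k)} (hπ : π ∈ CfeasAllocs θ s B πhat) :
    CSW θ s π ≤ CSWstar θ s B πhat :=
  le_csSup (cfeas_image_finite θ s B πhat).bddAbove ⟨π, hπ, rfl⟩

lemma cbestAlloc_spec {θ : CProfile V k} {s : V} {B : Set V}
    {πhat : V → Finset (Fin k)} (h : (CfeasAllocs θ s B πhat).Nonempty) :
    CbestAlloc θ s B πhat ∈ CfeasAllocs θ s B πhat ∧
      CSW θ s (CbestAlloc θ s B πhat) = CSWstar θ s B πhat := by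
  have hfin := cfeas_image_finite θ s B πhat
  have hne : (CSW θ s '' CfeasAllocs θ s B πhat).Nonempty := h.image _
  obtain ⟨π, hπ, hx⟩ := hne.csSup_mem hfin
  exact Classical.epsilon_spec
    (p := fun π => π ∈ CfeasAllocs θ s B πhat ∧ CSW θ s π = CSWstar θ s B πhat)
    ⟨π, hπ, hx⟩

lemma feasible_subset (θ : CProfile V k) (s : V) (B : Set V) :
    θ.feasible s B ⊆ B := fun _ hx => hx.2.1

lemma feasible_mono (θ : CProfile V k) (s : V) {B B' : Set V} (h : B ⊆ B') :
    θ.feasible s B ⊆ θ.feasible s B' := by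
  rintro x ⟨hx, hxB, hsB, hpath⟩
  exact ⟨hx, h hxB, h hsB,
    Relation.ReflTransGen.mono (fun a b hab => ⟨hab.1, h hab.2.1, h hab.2.2⟩) s x hpath⟩

lemma feasible_mono_adj {θ₁ θ₂ : CProfile V k} (s : V) (B : Set V)
    (hadj : ∀ a b, θ₂.adj a b → θ₁.adj a b) :
    θ₂.feasible s B ⊆ θ₁.feasible s B := by
  rintro x ⟨hx, hxB, hsB, hpath⟩
  exact ⟨hx, hxB, hsB,
    Relation.ReflTransGen.mono (fun a b hab => ⟨hadj a b hab.1, hab.2.1, hab.2.2⟩) s x hpath⟩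

lemma predeq_mono {o : V ≃ Fin (Fintype.card V)} {i j : V}
    (h : (o j : ℕ) ≤ (o i : ℕ)) : predeq o j ⊆ predeq o i := by
  intro a ha
  exact le_trans ha (Fin.le_def.mpr h)

lemma cpdaStep_succ (θ : CProfile V k) (s : V) (o : V ≃ Fin (Fintype.card V))
    (t : ℕ) (h : t < Fintype.card V) :
    cpdaStep θ s o (t + 1) =
      if o.symm ⟨t, h⟩ = s then cpdaStep θ s o t
      else Function.update (cpdaStep θ s o t) (o.symm ⟨t, h⟩)
        (CbestAlloc θ s (predeq o (o.symm ⟨t, h⟩)) (cpdaStep θ s o t)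
          (o.symm ⟨t, h⟩)) := by
  simp only [cpdaStep, dif_pos h]

lemma cpdaStep_succ_ge (θ : CProfile V k) (s : V) (o : V ≃ Fin (Fintype.card V))
    (t : ℕ) (h : ¬ t < Fintype.card V) :
    cpdaStep θ s o (t + 1) = cpdaStep θ s o t := by
  simp only [cpdaStep, dif_neg h]

/-- The running invariant of CPDA. -/
def Inv (θ : CProfile V k) (s : V) (o : V ≃ Fin (Fintype.card V)) (t : ℕ) : Prop :=
  cpdaStep θ s o t s = ∅ ∧
  (∀ j, t ≤ (o j : ℕ) → cpdaStep θ s o t j = ∅) ∧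
  (∀ j, cpdaStep θ s o t j ≠ ∅ →
    j ∈ θ.feasible s (predeq o j) ∧ (o j : ℕ) < t) ∧
  (∀ a b, a ≠ b → Disjoint (cpdaStep θ s o t a) (cpdaStep θ s o t b))

lemma inv_mem_cfeas {θ : CProfile V k} {s : V} {o : V ≃ Fin (Fintype.card V)}
    {t : ℕ} (hinv : Inv θ s o t) {i : V} (hti : t ≤ (o i : ℕ)) :
    cpdaStep θ s o t ∈ CfeasAllocs θ s (predeq o i) (cpdaStep θ s o t) := by
  obtain ⟨h1, h2, h3, h4⟩ := hinv
  refine ⟨h1, h4, ?_, fun j _ => Finset.Subset.refl _⟩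
  intro j hj
  by_contra hne
  obtain ⟨hjf, hjt⟩ := h3 j hne
  exact hj (feasible_mono θ s (predeq_mono (le_trans hjt.le hti)) hjf)

lemma inv_all (θ : CProfile V k) (s : V) (o : V ≃ Fin (Fintype.card V)) :
    ∀ t, Inv θ s o t := by
  intro t
  induction t with
  | zero =>
      exact ⟨rfl, fun _ _ => rfl, fun j hj => absurd rfl hj,
        fun a b _ => by simp [cpdaStep]⟩
  | succ t ih =>
      by_cases h : t < Fintype.card V
      · set i := o.symm ⟨t, h⟩ with hidef
        have hoi : (o i : ℕ) = t := by simp [hidef]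
        by_cases hs : i = s
        · have hstep : cpdaStep θ s o (t + 1) = cpdaStep θ s o t := by
            rw [cpdaStep_succ θ s o t h, if_pos hs]
          obtain ⟨h1, h2, h3, h4⟩ := ih
          exact ⟨hstep ▸ h1, fun j hj => hstep ▸ h2 j (le_trans (Nat.le_succ t) hj),
            fun j hj => by
              obtain ⟨hf, hlt⟩ := h3 j (hstep ▸ hj)
              exact ⟨hf, Nat.lt_succ_of_lt hlt⟩,
            fun a b hab => hstep ▸ h4 a b hab⟩
        · have hstep : cpdaStep θ s o (t + 1) =
              Function.update (cpdaStep θ s o t) i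
                (CbestAlloc θ s (predeq o i) (cpdaStep θ s o t) i) := by
            rw [cpdaStep_succ θ s o t h, if_neg hs]
          have hmem := inv_mem_cfeas ih (i := i) hoi.ge
          obtain ⟨h1, h2, h3, h4⟩ := ih
          obtain ⟨hb, hbsw⟩ := cbestAlloc_spec ⟨_, hmem⟩
          obtain ⟨hbs, hbdisj, hbfeas, hbsub⟩ := hb
          set πs := CbestAlloc θ s (predeq o i) (cpdaStep θ s o t) with hπs
          refine ⟨?_, ?_, ?_, ?_⟩
          · rw [hstep, Function.update_of_ne (Ne.symm hs), h1]
          · intro j hj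
            have hji : j ≠ i := fun e => by
              rw [e, hoi] at hj; exact Nat.not_succ_le_self t hj
            rw [hstep, Function.update_of_ne hji]
            exact h2 j (le_trans (Nat.le_succ t) hj)
          · intro j hj
            rw [hstep] at hj
            by_cases hji : j = i
            · subst hji
              rw [Function.update_self] at hj
              refine ⟨?_, by rw [hoi]; exact Nat.lt_succ_self t⟩
              by_contra hnf
              exact hj (hbfeas i hnf)
            · rw [Function.update_of_ne hji] at hj
              obtain ⟨hf, hlt⟩ := h3 j hj
              exact ⟨hf, Nat.lt_succ_of_lt hlt⟩
          · have key : ∀ b, b ≠ i → Disjoint (πs i) (cpdaStep θ s o t b) := by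
              intro b hbi
              by_cases hbs' : b = s
              · rw [hbs', h1]; exact Finset.disjoint_empty_right _
              · exact (hbdisj i b (Ne.symm hbi)).mono_right (hbsub b hbs')
            intro a b hab
            rw [hstep]
            by_cases hai : a = i
            · subst hai
              rw [Function.update_self, Function.update_of_ne (Ne.symm hab)]
              exact key b (Ne.symm hab)
            · rw [Function.update_of_ne hai]
              by_cases hbi : b = i
              · subst hbi
                rw [Function.update_self]
                exact (key a hai).symm
              · rw [Function.update_of_ne hbi]
                exact h4 a b hab
      · have hstep := cpdaStep_succ_ge θ s o t h
        obtain ⟨h1, h2, h3, h4⟩ := ih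
        exact ⟨hstep ▸ h1, fun j hj => hstep ▸ h2 j (le_trans (Nat.le_succ t) hj),
          fun j hj => by
            obtain ⟨hf, hlt⟩ := h3 j (hstep ▸ hj)
            exact ⟨hf, Nat.lt_succ_of_lt hlt⟩,
          fun a b hab => hstep ▸ h4 a b hab⟩

/-- After agent `i`'s turn, `i`'s bundle never changes. -/
lemma cpdaStep_eq_best (θ : CProfile V k) (s : V) (o : V ≃ Fin (Fintype.card V))
    (i : V) (his : i ≠ s) :
    ∀ t, (o i : ℕ) < t → cpdaStep θ s o t i =
      CbestAlloc θ s (predeq o i) (cpdaPrior θ s o i) i := by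
  intro t
  induction t with
  | zero => intro h; exact absurd h (Nat.not_lt_zero _)
  | succ t ih =>
      intro ht
      rcases Nat.lt_succ_iff_lt_or_eq.mp ht with ht' | ht'
      · by_cases h : t < Fintype.card V
        · rw [cpdaStep_succ θ s o t h]
          have hji : o.symm ⟨t, h⟩ ≠ i := by
            intro e
            have : (o i : ℕ) = t := by rw [← e]; simp
            omega
          by_cases hs' : o.symm ⟨t, h⟩ = s
          · rw [if_pos hs']; exact ih ht'
          · rw [if_neg hs', Function.update_of_ne (Ne.symm hji)]; exact ih ht'
        · rw [cpdaStep_succ_ge θ s o t h]; exact ih ht'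
      · have h : t < Fintype.card V := ht' ▸ (o i).isLt
        have hsymm : o.symm ⟨t, h⟩ = i := by
          subst ht'; simp
        rw [cpdaStep_succ θ s o t h, hsymm, if_neg his, Function.update_self]
        have : cpdaPrior θ s o i = cpdaStep θ s o t := by
          unfold cpdaPrior; rw [ht']
        rw [this]

lemma cpdaAlloc_eq_best (θ : CProfile V k) (s : V) (o : V ≃ Fin (Fintype.card V))
    (i : V) (his : i ≠ s) :
    cpdaAlloc θ s o i =
      CbestAlloc θ s (predeq o i) (cpdaPrior θ s o i) i :=
  cpdaStep_eq_best θ s o i his (Fintype.card V) (o i).isLt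

section Agree

variable {θ₁ θ₂ : CProfile V k} {i : V}

lemma adj_iff_of_agree (hnbr : ∀ j, j ≠ i → θ₁.nbr j = θ₂.nbr j)
    {a b : V} (ha : a ≠ i) (hb : b ≠ i) : θ₁.adj a b ↔ θ₂.adj a b := by
  unfold CProfile.adj
  rw [hnbr a ha, hnbr b hb]

lemma feasible_eq_of_agree (hnbr : ∀ j, j ≠ i → θ₁.nbr j = θ₂.nbr j)
    (s : V) {B : Set V} (hB : i ∉ B) :
    θ₁.feasible s B = θ₂.feasible s B := by
  have hrel : (fun a b => θ₁.adj a b ∧ a ∈ B ∧ b ∈ B)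
      = (fun a b => θ₂.adj a b ∧ a ∈ B ∧ b ∈ B) := by
    funext a b
    apply propext
    constructor
    · rintro ⟨hab, ha, hb⟩
      exact ⟨(adj_iff_of_agree hnbr (fun e => hB (e ▸ ha)) (fun e => hB (e ▸ hb))).mp hab,
        ha, hb⟩
    · rintro ⟨hab, ha, hb⟩
      exact ⟨(adj_iff_of_agree hnbr (fun e => hB (e ▸ ha)) (fun e => hB (e ▸ hb))).mpr hab,
        ha, hb⟩
  unfold CProfile.feasible
  rw [hrel]

lemma cfeas_eq_of_agree (hnbr : ∀ j, j ≠ i → θ₁.nbr j = θ₂.nbr j)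
    (s : V) {B : Set V} (hB : i ∉ B) (πhat : V → Finset (Fin k)) :
    CfeasAllocs θ₁ s B πhat = CfeasAllocs θ₂ s B πhat := by
  unfold CfeasAllocs
  rw [feasible_eq_of_agree hnbr s hB]

lemma csw_eq_of_agree (hval : ∀ j, j ≠ i → θ₁.val j = θ₂.val j)
    (h0 : θ₁.val i ∅ = θ₂.val i ∅) (s : V) {π : V → Finset (Fin k)}
    (hπ : π i = ∅) : CSW θ₁ s π = CSW θ₂ s π := by
  unfold CSW
  refine Finset.sum_congr rfl fun j _ => ?_
  by_cases hji : j = i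
  · subst hji; rw [hπ, h0]
  · rw [hval j hji]

lemma cswstar_eq_of_agree (hnbr : ∀ j, j ≠ i → θ₁.nbr j = θ₂.nbr j)
    (hval : ∀ j, j ≠ i → θ₁.val j = θ₂.val j)
    (h0 : θ₁.val i ∅ = θ₂.val i ∅)
    (s : V) {B : Set V} (hB : i ∉ B) (πhat : V → Finset (Fin k)) :
    CSWstar θ₁ s B πhat = CSWstar θ₂ s B πhat := by
  unfold CSWstar
  have himg : CSW θ₁ s '' CfeasAllocs θ₁ s B πhat
      = CSW θ₂ s '' CfeasAllocs θ₂ s B πhat := by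
    rw [← cfeas_eq_of_agree hnbr s hB πhat]
    exact Set.image_congr fun π hπ =>
      csw_eq_of_agree hval h0 s
        (hπ.2.2.1 i fun hm => hB (feasible_subset θ₁ s B hm))
  rw [himg]

lemma cbest_eq_of_agree (hnbr : ∀ j, j ≠ i → θ₁.nbr j = θ₂.nbr j)
    (hval : ∀ j, j ≠ i → θ₁.val j = θ₂.val j)
    (h0 : θ₁.val i ∅ = θ₂.val i ∅)
    (s : V) {B : Set V} (hB : i ∉ B) (πhat : V → Finset (Fin k)) :
    CbestAlloc θ₁ s B πhat = CbestAlloc θ₂ s B πhat := by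
  unfold CbestAlloc
  have hfe := cfeas_eq_of_agree hnbr s hB πhat
  have hsw := cswstar_eq_of_agree hnbr hval h0 s hB πhat
  congr 1
  funext π
  apply propext
  constructor
  · rintro ⟨hm, he⟩
    have hπi : π i = ∅ := hm.2.2.1 i fun hmem => hB (feasible_subset θ₁ s B hmem)
    exact ⟨hfe ▸ hm, ((csw_eq_of_agree hval h0 s hπi).symm.trans he).trans hsw⟩
  · rintro ⟨hm, he⟩
    have hπi : π i = ∅ := hm.2.2.1 i fun hmem => hB (feasible_subset θ₂ s B hmem)
    exact ⟨hfe ▸ hm, ((csw_eq_of_agree hval h0 s hπi).trans he).trans hsw.symm⟩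

lemma cpdaStep_agree (hnbr : ∀ j, j ≠ i → θ₁.nbr j = θ₂.nbr j)
    (hval : ∀ j, j ≠ i → θ₁.val j = θ₂.val j)
    (h0 : θ₁.val i ∅ = θ₂.val i ∅)
    (s : V) (o : V ≃ Fin (Fintype.card V)) :
    ∀ t, t ≤ (o i : ℕ) → cpdaStep θ₁ s o t = cpdaStep θ₂ s o t := by
  intro t
  induction t with
  | zero => intro _; rfl
  | succ t ih =>
      intro ht
      have h : t < Fintype.card V :=
        lt_of_lt_of_le (Nat.lt_of_succ_le ht) (le_of_lt (o i).isLt)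
      set j := o.symm ⟨t, h⟩ with hjdef
      have hoj : (o j : ℕ) = t := by simp [hjdef]
      have hB : i ∉ predeq o j := fun hmem => by
        have : (o i : ℕ) ≤ (o j : ℕ) := Fin.le_def.mp hmem
        omega
      rw [cpdaStep_succ θ₁ s o t h, cpdaStep_succ θ₂ s o t h,
        ih (le_trans (Nat.le_succ t) ht),
        cbest_eq_of_agree hnbr hval h0 s hB]

end Agree

lemma cpdaAlloc_empty_of_full (θ : CProfile V k) (s : V)
    (o : V ≃ Fin (Fintype.card V)) (i : V) (his : i ≠ s)
    (hfull : Finset.univ.biUnion (cpdaPrior θ s o i) = (Finset.univ : Finset (Fin k))) :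
    cpdaAlloc θ s o i = ∅ := by
  have hinv := inv_all θ s o (o i : ℕ)
  have hmem : cpdaPrior θ s o i ∈
      CfeasAllocs θ s (predeq o i) (cpdaPrior θ s o i) :=
    inv_mem_cfeas hinv le_rfl
  obtain ⟨⟨hbs, hbdisj, hbfeas, hbsub⟩, -⟩ := cbestAlloc_spec ⟨_, hmem⟩
  rw [cpdaAlloc_eq_best θ s o i his]
  have hpi : cpdaPrior θ s o i i = ∅ := hinv.2.1 i le_rfl
  have hps : cpdaPrior θ s o i s = ∅ := hinv.1
  apply Finset.eq_empty_of_forall_notMem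
  intro x hx
  have hxmem : x ∈ Finset.univ.biUnion (cpdaPrior θ s o i) :=
    hfull ▸ Finset.mem_univ x
  obtain ⟨j, -, hj⟩ := Finset.mem_biUnion.mp hxmem
  have hji : j ≠ i := fun e => by
    rw [e, hpi] at hj; exact Finset.notMem_empty x hj
  have hjs : j ≠ s := fun e => by
    rw [e, hps] at hj; exact Finset.notMem_empty x hj
  exact Finset.disjoint_left.mp (hbdisj i j (Ne.symm hji)) hx (hbsub j hjs hj)

end DA


/-- CPDA is incentive compatible: in the combinatorial setting,
for every buyer i with true type θ_i = (v, r), every report θ'_i = (v', r')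
with r' ⊆ r, every report profile of the others (recorded in θ), and every
order o, u_i^o(θ_i, (θ_i, θ'_{-i})) ≥ u_i^o(θ_i, (θ'_i, θ'_{-i})). -/
theorem cpda_IC {V : Type*} [Fintype V] [DecidableEq V]
    {k : ℕ} (hk : 1 ≤ k) (θ : DA.CProfile V k) (s : V) (hθ : θ.Valid s)
    (i : V) (hi : i ≠ s)
    (v v' : Finset (Fin k) → ℝ) (r r' : Set V) (hr : r' ⊆ r)
    (hv : DA.CValidVal k v) (hv' : DA.CValidVal k v')
    (o : V ≃ Fin (Fintype.card V)) :
    DA.cpdaUtil v (DA.CupdateAgent θ i v r) s o i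
      ≥ DA.cpdaUtil v (DA.CupdateAgent θ i v' r') s o i := by
  classical
  set θ₁ := DA.CupdateAgent θ i v r with hθ₁
  set θ₂ := DA.CupdateAgent θ i v' r' with hθ₂
  have hnbr : ∀ j, j ≠ i → θ₁.nbr j = θ₂.nbr j := fun j hj => by
    simp [hθ₁, hθ₂, DA.CupdateAgent, Function.update_of_ne hj]
  have hval : ∀ j, j ≠ i → θ₁.val j = θ₂.val j := fun j hj => by
    simp [hθ₁, hθ₂, DA.CupdateAgent, Function.update_of_ne hj]
  have hval1 : θ₁.val i = v := by
    simp [hθ₁, DA.CupdateAgent]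
  have hval2 : θ₂.val i = v' := by
    simp [hθ₂, DA.CupdateAgent]
  have h0 : θ₁.val i ∅ = θ₂.val i ∅ := by
    rw [hval1, hval2, hv, hv']
  have hprior : DA.cpdaPrior θ₁ s o i = DA.cpdaPrior θ₂ s o i :=
    DA.cpdaStep_agree hnbr hval h0 s o (o i : ℕ) le_rfl
  set P := DA.cpdaPrior θ₂ s o i with hP
  unfold DA.cpdaUtil DA.cpdaPay
  rw [if_neg hi, if_neg hi, hprior]
  by_cases hfull : Finset.univ.biUnion P = (Finset.univ : Finset (Fin k))
  · rw [if_pos hfull, if_pos hfull]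
    have h1 : DA.cpdaAlloc θ₁ s o i = ∅ :=
      DA.cpdaAlloc_empty_of_full θ₁ s o i hi (by rw [hprior]; exact hfull)
    have h2 : DA.cpdaAlloc θ₂ s o i = ∅ :=
      DA.cpdaAlloc_empty_of_full θ₂ s o i hi hfull
    rw [h1, h2]
  · rw [if_neg hfull, if_neg hfull]
    have hnpred : i ∉ DA.pred o i := fun hm => lt_irrefl (o i) hm
    have hnpredeq : i ∈ DA.predeq o i := le_refl (o i)
    have hA : DA.CSWstar θ₁ s (DA.pred o i) P = DA.CSWstar θ₂ s (DA.pred o i) P :=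
      DA.cswstar_eq_of_agree hnbr hval h0 s hnpred P
    -- the misreport's chosen allocation
    have hmem2 : P ∈ DA.CfeasAllocs θ₂ s (DA.predeq o i) P :=
      DA.inv_mem_cfeas (DA.inv_all θ₂ s o (o i : ℕ)) le_rfl
    obtain ⟨hm2, hsw2⟩ := DA.cbestAlloc_spec ⟨_, hmem2⟩
    set π₂ := DA.CbestAlloc θ₂ s (DA.predeq o i) P with hπ₂
    have ha2 : DA.cpdaAlloc θ₂ s o i = π₂ i :=
      DA.cpdaAlloc_eq_best θ₂ s o i hi
    -- π₂ is feasible for the truthful profile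
    have hadj : ∀ a b, θ₂.adj a b → θ₁.adj a b := by
      have hnsub : ∀ j, θ₂.nbr j ⊆ θ₁.nbr j := fun j => by
        by_cases hj : j = i
        · subst hj
          simp only [hθ₁, hθ₂, DA.CupdateAgent, Function.update_self]
          exact hr
        · rw [hnbr j hj]
      rintro a b (h | h)
      · exact Or.inl (hnsub a h)
      · exact Or.inr (hnsub b h)
    have hmem1 : π₂ ∈ DA.CfeasAllocs θ₁ s (DA.predeq o i) P := by
      obtain ⟨g1, g2, g3, g4⟩ := hm2
      exact ⟨g1, g2, fun j hj => g3 j fun hm =>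
        hj (DA.feasible_mono_adj s (DA.predeq o i) hadj hm), g4⟩
    have hle : DA.CSW θ₁ s π₂ ≤ DA.CSWstar θ₁ s (DA.predeq o i) P :=
      DA.le_CSWstar hmem1
    have himem : i ∈ Finset.univ.erase s := Finset.mem_erase.mpr ⟨hi, Finset.mem_univ i⟩
    have hsum : DA.CSW θ₁ s π₂ = DA.CSW θ₂ s π₂ + (v (π₂ i) - v' (π₂ i)) := by
      unfold DA.CSW
      rw [← Finset.sum_erase_add _ _ himem, ← Finset.sum_erase_add _ (fun j => θ₂.val j (π₂ j)) himem]
      have hcongr : ∑ j ∈ (Finset.univ.erase s).erase i, θ₁.val j (π₂ j)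
          = ∑ j ∈ (Finset.univ.erase s).erase i, θ₂.val j (π₂ j) :=
        Finset.sum_congr rfl fun j hj =>
          by rw [hval j (Finset.mem_erase.mp hj).1]
      rw [hcongr, hval1, hval2]
      ring
    rw [ha2, hval1, hval2]
    have hsw2' : DA.CSW θ₂ s π₂ = DA.CSWstar θ₂ s (DA.predeq o i) P := hsw2
    linarith
end

section
/- If a diffusion auction mechanism is 1-Shapley fair (every buyer's utility under truthful reporting equals her Shapley contribution, u_i = φ_i(θ') for all i ∈ N) and is non-deficit in the sense that the seller's revenue is at least her Shapley contribution (Σ_{i∈N} p_i ≥ φ_s(θ')), then the mechanism's allocation must be efficient: SW(θ', π) = SW*(θ', V). -/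
section Aux
open Finset

-- coefficient identity as naturals
lemma coef_zero {n m : ℕ} (hm : 0 < m) (hmn : m < n) :
    m * ((m-1).factorial * (n - (m-1) - 1).factorial)
      = (n - m) * (m.factorial * (n - m - 1).factorial) := by
  have h1 : m * (m-1).factorial = m.factorial := by
    cases m with
    | zero => omega
    | succ m => simp [Nat.factorial_succ]
  have h2 : n - (m-1) - 1 = n - m := by omega
  have h3 : (n - m) * (n - m - 1).factorial = (n - m).factorial := by
    have : n - m = (n - m - 1) + 1 := by omega
    rw [this]; simp [Nat.factorial_succ]
  calc m * ((m-1).factorial * (n - (m-1) - 1).factorial)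
      = (m * (m-1).factorial) * (n-m).factorial := by rw [h2]; ring
    _ = m.factorial * ((n-m) * (n-m-1).factorial) := by rw [h1, h3]
    _ = (n - m) * (m.factorial * (n - m - 1).factorial) := by ring

lemma shapley_telescope {V : Type*} [Fintype V] [DecidableEq V] [Nonempty V]
    (f : Finset V → ℝ) :
    ∑ i : V, ∑ B ∈ (univ.erase i).powerset,
      ((B.card.factorial * (Fintype.card V - B.card - 1).factorial : ℝ) /
        ((Fintype.card V).factorial : ℝ)) * (f (insert i B) - f B)
    = f univ - f ∅ := by
  classical
  set n := Fintype.card V with hn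
  have hn1 : 1 ≤ n := Fintype.card_pos
  set c : ℕ → ℝ := fun b => (b.factorial * (n - b - 1).factorial : ℝ) / (n.factorial : ℝ) with hc
  -- g i S
  have key : ∀ i : V, ∑ B ∈ (univ.erase i).powerset, c B.card * (f (insert i B) - f B)
      = ∑ S ∈ (univ : Finset V).powerset,
          (if i ∈ S then c (S.card - 1) * f S else -(c S.card * f S)) := by
    intro i
    have e1 : ∑ B ∈ (univ.erase i).powerset, c B.card * f (insert i B)
        = ∑ S ∈ (univ : Finset V).powerset, (if i ∈ S then c (S.card - 1) * f S else 0) := by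
      rw [← Finset.sum_filter]
      refine Finset.sum_nbij' (fun B => insert i B) (fun S => S.erase i) ?_ ?_ ?_ ?_ ?_
      · intro B hB
        simp only [mem_powerset, mem_filter] at *
        exact ⟨subset_univ _, mem_insert_self _ _⟩
      · intro S hS
        simp only [mem_powerset, mem_filter] at *
        intro x hx
        simp only [mem_erase] at hx
        exact mem_erase.2 ⟨hx.1, mem_univ _⟩
      · intro B hB
        simp only [mem_powerset] at hB
        have : i ∉ B := ((subset_erase.1 hB).2)
        simp [Finset.erase_insert this]
      · intro S hS
        simp only [mem_powerset, mem_filter] at hS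
        exact Finset.insert_erase hS.2
      · intro B hB
        simp only [mem_powerset] at hB
        have hiB : i ∉ B := (subset_erase.1 hB).2
        have : (insert i B).card - 1 = B.card := by
          rw [Finset.card_insert_of_notMem hiB]; omega
        simp [this]
    have e2 : ∑ B ∈ (univ.erase i).powerset, c B.card * f B
        = ∑ S ∈ (univ : Finset V).powerset, (if i ∉ S then c S.card * f S else 0) := by
      rw [← Finset.sum_filter]
      apply Finset.sum_congr
      · ext B; simp [Finset.subset_erase]
      · intros; rfl
    calc ∑ B ∈ (univ.erase i).powerset, c B.card * (f (insert i B) - f B)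
        = ∑ B ∈ (univ.erase i).powerset, (c B.card * f (insert i B) - c B.card * f B) := by
          simp [mul_sub]
      _ = (∑ B ∈ (univ.erase i).powerset, c B.card * f (insert i B))
          - ∑ B ∈ (univ.erase i).powerset, c B.card * f B := by rw [Finset.sum_sub_distrib]
      _ = _ := by
          rw [e1, e2, ← Finset.sum_sub_distrib]
          apply Finset.sum_congr rfl
          intro S _
          by_cases h : i ∈ S <;> simp [h]
  -- rewrite whole sum
  calc ∑ i : V, ∑ B ∈ (univ.erase i).powerset,
      ((B.card.factorial * (n - B.card - 1).factorial : ℝ) / (n.factorial : ℝ))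
        * (f (insert i B) - f B)
      = ∑ i : V, ∑ S ∈ (univ : Finset V).powerset,
          (if i ∈ S then c (S.card - 1) * f S else -(c S.card * f S)) := by
        exact Finset.sum_congr rfl fun i _ => key i
    _ = ∑ S ∈ (univ : Finset V).powerset, ∑ i : V,
          (if i ∈ S then c (S.card - 1) * f S else -(c S.card * f S)) := Finset.sum_comm
    _ = ∑ S ∈ (univ : Finset V).powerset,
          ((S.card : ℝ) * (c (S.card - 1) * f S) - ((n : ℝ) - S.card) * (c S.card * f S)) := by
        apply Finset.sum_congr rfl
        intro S hS
        have hcard : S.card ≤ n := by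
          simpa [hn] using Finset.card_le_univ S
        rw [Finset.sum_ite, Finset.sum_const, Finset.sum_const]
        have h1 : (univ.filter (· ∈ S)) = S := by ext x; simp
        have h2 : (univ.filter (· ∉ S)).card = n - S.card := by
          rw [Finset.filter_not, Finset.card_sdiff_of_subset (by simp [h1, Finset.filter_eq_self])]
          simp [h1, hn]
        rw [h1, h2]
        simp only [nsmul_eq_mul, Nat.cast_sub hcard, smul_neg]
        ring
    _ = f univ - f ∅ := by
        have hfac : ((n.factorial : ℕ) : ℝ) ≠ 0 := by
          exact_mod_cast n.factorial_ne_zero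
        have hzero : ∀ S ∈ (univ : Finset V).powerset, S ∉ ({∅, univ} : Finset (Finset V)) →
            ((S.card : ℝ) * (c (S.card - 1) * f S) - ((n : ℝ) - S.card) * (c S.card * f S)) = 0 := by
          intro S _ hS
          simp only [Finset.mem_insert, Finset.mem_singleton] at hS
          push_neg at hS
          have hm : 0 < S.card := Finset.card_pos.2 hS.1
          have hmn : S.card < n := by
            have h1 : S.card ≤ n := by simpa [hn] using Finset.card_le_univ S
            rcases h1.lt_or_eq with h | h
            · exact h
            · exact absurd (Finset.card_eq_iff_eq_univ S |>.1 (by simpa [hn] using h)) hS.2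
          have hkey := coef_zero hm hmn
          have e : (S.card : ℝ) * c (S.card - 1) = ((n : ℝ) - S.card) * c S.card := by
            rw [← Nat.cast_sub hmn.le]
            simp only [hc]
            field_simp
            exact_mod_cast (by simpa only [← mul_assoc] using hkey : S.card * (S.card - 1).factorial * (n - (S.card - 1) - 1).factorial = (n - S.card) * S.card.factorial * (n - S.card - 1).factorial)
          linear_combination f S * e
        have hsub : ({∅, univ} : Finset (Finset V)) ⊆ (univ : Finset V).powerset := by
          intro S hS
          simp only [Finset.mem_insert, Finset.mem_singleton] at hS
          rcases hS with h | h <;> simp [h]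
        rw [← Finset.sum_subset hsub hzero]
        have hne : (∅ : Finset V) ≠ univ := by
          simpa using (Finset.univ_nonempty (α := V)).ne_empty.symm
        rw [Finset.sum_pair hne]
        have hc0 : (n : ℝ) * c 0 = 1 := by
          have h01 : n - 0 - 1 = n - 1 := by omega
          simp only [hc, h01, Nat.factorial_zero, Nat.cast_one, one_mul]
          field_simp
          exact_mod_cast Nat.mul_factorial_pred (show n ≠ 0 by omega)
        have hcn : (n : ℝ) * c (n - 1) = 1 := by
          have h0 : n - (n - 1) - 1 = 0 := by omega
          simp only [hc, h0, Nat.factorial_zero, Nat.cast_one, mul_one]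
          field_simp
          exact_mod_cast Nat.mul_factorial_pred (show n ≠ 0 by omega)
        simp only [Finset.card_empty, Finset.card_univ, ← hn, Nat.cast_zero]
        linear_combination f univ * hcn - f ∅ * hc0
lemma SWstar_empty {V : Type*} [Fintype V] [DecidableEq V] {k : ℕ}
    (θ : DA.Profile V k) (s : V) (hθ : θ.Valid s) :
    DA.SWstar θ s (∅ : Set V) 0 = 0 := by
  have hfeas : θ.feasible s (∅ : Set V) = ∅ := by
    ext i; simp [DA.Profile.feasible]
  have hset : DA.feasAllocs θ s (∅ : Set V) 0 = {fun _ => 0} := by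
    ext π
    constructor
    · rintro ⟨h1, h2, h3, h4⟩
      have : π = fun _ => 0 := funext fun i => h3 i (by simp [hfeas])
      simpa using this
    · intro h
      have hπ : π = fun _ => 0 := h
      subst hπ
      exact ⟨rfl, by simp, fun i _ => rfl, fun j _ => le_refl 0⟩
  rw [DA.SWstar, hset, Set.image_singleton, csSup_singleton]
  rw [DA.SW]
  apply Finset.sum_eq_zero
  intro i hi
  exact (hθ i (Finset.mem_erase.1 hi).1).1

lemma SW_le_SWstar {V : Type*} [Fintype V] [DecidableEq V] {k : ℕ}
    (θ : DA.Profile V k) (s : V) (π : V → ℕ)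
    (hπ : π ∈ DA.feasAllocs θ s Set.univ 0) :
    DA.SW θ s π ≤ DA.SWstar θ s Set.univ 0 := by
  apply le_csSup
  · apply Set.Finite.bddAbove
    apply Set.Finite.image
    apply Set.Finite.subset (Set.Finite.pi (fun _ : V => Set.finite_Iic k))
    intro ρ hρ
    obtain ⟨h1, h2, h3, h4⟩ := hρ
    intro i _
    by_cases hi : i = s
    · subst hi; simp [h1]
    · have : ρ i ≤ ∑ j ∈ Finset.univ.erase s, ρ j :=
        Finset.single_le_sum (fun j _ => Nat.zero_le _)
          (Finset.mem_erase.2 ⟨hi, Finset.mem_univ _⟩)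
      exact Set.mem_Iic.2 (this.trans h2)
  · exact Set.mem_image_of_mem _ hπ

end Aux

/-- If a diffusion auction mechanism is 1-Shapley fair (every
buyer's utility under truthful reporting equals her Shapley contribution) and
is non-deficit in the sense that the seller's revenue is at least her Shapley
contribution, then the mechanism's allocation must be efficient:
SW(θ', π) = SW*(θ', V). -/
theorem one_shapley_fair_nondeficit_efficient {V : Type*} [Fintype V]
    [DecidableEq V] {k : ℕ} (hk : 1 ≤ k)
    (θ : DA.Profile V k) (s : V) (hθ : θ.Valid s)
    (π : V → ℕ) (p : V → ℝ)
    (hπ : π ∈ DA.feasAllocs θ s Set.univ 0)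
    (hfair : ∀ i : V, i ≠ s → θ.val i (π i) - p i = DA.shapley θ s i)
    (hnd : DA.shapley θ s s ≤ ∑ i ∈ Finset.univ.erase s, p i) :
    DA.SW θ s π = DA.SWstar θ s Set.univ 0 := by
  have hne : Nonempty V := ⟨s⟩
  have heff : ∑ i : V, DA.shapley θ s i = DA.SWstar θ s Set.univ 0 := by
    have ht := shapley_telescope (V := V) (f := fun B : Finset V => DA.SWstar θ s ↑B 0)
    have hsh : ∑ i : V, DA.shapley θ s i
        = DA.SWstar θ s (↑(Finset.univ : Finset V)) 0
          - DA.SWstar θ s (↑(∅ : Finset V)) 0 := by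
      simpa [DA.shapley] using ht
    rw [hsh, Finset.coe_univ, Finset.coe_empty, SWstar_empty θ s hθ, sub_zero]
  have hle : DA.SW θ s π ≤ DA.SWstar θ s Set.univ 0 := SW_le_SWstar θ s π hπ
  have h1 : DA.SW θ s π = ∑ i ∈ Finset.univ.erase s, (DA.shapley θ s i + p i) := by
    rw [DA.SW]
    apply Finset.sum_congr rfl
    intro i hi
    have := hfair i (Finset.mem_erase.1 hi).1
    linarith
  have h2 : ∑ i ∈ Finset.univ.erase s, DA.shapley θ s i + DA.shapley θ s s
      = ∑ i : V, DA.shapley θ s i :=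
    Finset.sum_erase_add _ _ (Finset.mem_univ s)
  have hge : DA.SWstar θ s Set.univ 0 ≤ DA.SW θ s π := by
    rw [h1, Finset.sum_add_distrib, ← heff, ← h2]
    linarith
  linarith
end
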